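/- (Theorem 1, pathwise form.) Fix a > 1 and λ ∈ (0,1), let (X_i)_{i≥1} be independent, identically distributed positive random variables with 0 < E[X_1] < ∞ and E[X_1²] = ∞ (as holds when P(X_1 > x) ~ x^{−α} with α ∈ (1,2)), and let A′ be the reordered on/off process built from (X_i) with queue Q(t) = sup_{0≤s≤t} ∫_s^t (A′(u) − 1) du. Then almost surely the time-averaged queue length (1/T) ∫_0^T Q(t) dt → ∞ as T → ∞, even though the mean arrival rate (utilisation) is λ < 1. -/

import Mathlib

open MeasureTheory ProbabilityTheory Filter Finset Set Topology

lemma det_main (a lam : ℝ) (ha : 1 < a) (hlam0 : 0 < lam) (hlam1 : lam < 1)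
    (X : ℕ → ℝ) (hpos : ∀ i, 0 < X i)
    (T : ℕ → ℝ) (hT : ∀ N, T N = (a / lam) * ∑ i ∈ Finset.range N, X i)
    (A : ℝ → ℝ)
    (hAon : ∀ i t, T i ≤ t → t < T i + X i → A t = a)
    (hAoff : ∀ i t, T i + X i ≤ t → t < T (i + 1) → A t = 0)
    (Q : ℝ → ℝ)
    (hQ : ∀ t, Q t = ⨆ u : Set.Icc (0:ℝ) t, ∫ v in (u : ℝ)..t, (A v - 1))
    (μ : ℝ) (hμ : 0 < μ)
    (hS : Tendsto (fun N : ℕ => ((N:ℝ))⁻¹ * ∑ i ∈ Finset.range N, X i) atTop (𝓝 μ))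
    (hV : Tendsto (fun N : ℕ => ((N:ℝ))⁻¹ * ∑ i ∈ Finset.range N, (X i)^2) atTop atTop) :
    Tendsto (fun R : ℝ => (1 / R) * ∫ t in (0:ℝ)..R, Q t) atTop atTop := by
  have ha0 : (0:ℝ) < a := lt_trans one_pos ha
  set r : ℝ := a / lam with hrdef
  have hra : a < r := by
    rw [hrdef, lt_div_iff₀ hlam0]
    nlinarith
  have hr1 : 1 < r := lt_trans ha hra
  have hr0 : (0:ℝ) < r := lt_trans one_pos hr1
  have hT0 : T 0 = 0 := by simp [hT]
  have hTsucc : ∀ i, T (i + 1) = T i + r * X i := by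
    intro i; rw [hT, hT, Finset.sum_range_succ]; ring
  have hTlt : ∀ i, T i < T (i + 1) := by
    intro i; rw [hTsucc]; nlinarith [hpos i]
  have hTmono : StrictMono T := strictMono_nat_of_lt_succ hTlt
  have hTnn : ∀ i, 0 ≤ T i := by
    intro i; rw [← hT0]; exact hTmono.monotone (Nat.zero_le i)
  have hTX : ∀ i, T i + X i < T (i + 1) := by
    intro i; rw [hTsucc]; nlinarith [hpos i]
  -- T tends to infinity
  have hStop : Tendsto (fun N : ℕ => ∑ i ∈ Finset.range N, X i) atTop atTop := by
    have h1 : Tendsto (fun N : ℕ => (N : ℝ) * (((N:ℝ))⁻¹ * ∑ i ∈ Finset.range N, X i))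
        atTop atTop := Filter.Tendsto.atTop_mul_pos hμ tendsto_natCast_atTop_atTop hS
    refine h1.congr' ?_
    filter_upwards [eventually_ge_atTop 1] with N hN
    have : (N:ℝ) ≠ 0 := by positivity
    field_simp
  have hTtop : Tendsto T atTop atTop := by
    have := hStop.const_mul_atTop hr0
    refine this.congr fun N => (hT N).symm
  -- cover
  have hcover : ∀ t : ℝ, 0 ≤ t → ∃ i, T i ≤ t ∧ t < T (i + 1) := by
    intro t ht
    have hex : ∃ k, t < T k := (hTtop.eventually_gt_atTop t).exists
    classical
    set k := Nat.find hex with hk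
    have hk1 : t < T k := Nat.find_spec hex
    have hkne : k ≠ 0 := by
      intro h0
      rw [h0, hT0] at hk1; exact absurd hk1 (not_lt.2 ht)
    obtain ⟨i, hik⟩ := Nat.exists_eq_succ_of_ne_zero hkne
    refine ⟨i, ?_, by rw [← Nat.succ_eq_add_one, ← hik]; exact hk1⟩
    by_contra h
    exact (Nat.find_min hex (show i < k by omega)) (lt_of_not_ge h)
  -- the measurable model of A
  set s : Set ℝ := ⋃ i, Ico (T i) (T i + X i) with hs
  set f : ℝ → ℝ := s.indicator (fun _ => a) with hf
  have hsm : MeasurableSet s := MeasurableSet.iUnion fun i => measurableSet_Ico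
  have hfm : Measurable f := measurable_const.indicator hsm
  have hAf : ∀ t : ℝ, 0 ≤ t → A t = f t := by
    intro t ht
    obtain ⟨i, h1, h2⟩ := hcover t ht
    by_cases hcase : t < T i + X i
    · rw [hAon i t h1 hcase, hf, Set.indicator_of_mem]
      exact Set.mem_iUnion.2 ⟨i, h1, hcase⟩
    · push_neg at hcase
      rw [hAoff i t hcase h2, hf, Set.indicator_of_notMem]
      intro hmem
      obtain ⟨j, hj1, hj2⟩ := Set.mem_iUnion.1 hmem
      rcases lt_trichotomy j i with hji | rfl | hij
      · have : T (j+1) ≤ T i := hTmono.monotone hji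
        have := hTX j
        linarith
      · linarith
      · have : T (i+1) ≤ T j := hTmono.monotone hij
        linarith
  have hA0a : ∀ t : ℝ, 0 ≤ t → 0 ≤ A t ∧ A t ≤ a := by
    intro t ht
    rw [hAf t ht, hf]
    by_cases h : t ∈ s
    · rw [Set.indicator_of_mem h]; exact ⟨le_of_lt ha0, le_refl _⟩
    · rw [Set.indicator_of_notMem h]; exact ⟨le_refl _, le_of_lt ha0⟩
  -- interval integrability of A
  have hfint : ∀ u w : ℝ, IntervalIntegrable f volume u w := by
    intro u w
    rw [intervalIntegrable_iff]
    refine Measure.integrableOn_of_bounded (by exact (measure_Ioc_lt_top).ne) hfm.aestronglyMeasurable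
      (M := a) (ae_of_all _ fun x => ?_)
    rw [hf]
    by_cases h : x ∈ s
    · rw [Set.indicator_of_mem h]; rw [Real.norm_eq_abs, abs_of_pos ha0]
    · rw [Set.indicator_of_notMem h]; simp [le_of_lt ha0]
  have hAint : ∀ u w : ℝ, 0 ≤ u → 0 ≤ w → IntervalIntegrable A volume u w := by
    intro u w hu hw
    rw [intervalIntegrable_iff]
    exact (intervalIntegrable_iff.1 (hfint u w)).congr_fun
      (fun x hx => (hAf x (le_trans (le_min hu hw) (le_of_lt hx.1))).symm) measurableSet_uIoc
  have hAint1 : ∀ u w : ℝ, 0 ≤ u → 0 ≤ w →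
      IntervalIntegrable (fun v => A v - 1) volume u w := by
    intro u w hu hw
    exact (hAint u w hu hw).sub intervalIntegrable_const
  -- integral bounds
  have hub : ∀ u t : ℝ, 0 ≤ u → u ≤ t → (∫ v in u..t, (A v - 1)) ≤ (a - 1) * (t - u) := by
    intro u t hu hut
    have ht : (0:ℝ) ≤ t := le_trans hu hut
    calc (∫ v in u..t, (A v - 1)) ≤ ∫ v in u..t, (a - 1 : ℝ) := by
          apply intervalIntegral.integral_mono_on hut (hAint1 u t hu ht) intervalIntegrable_const
          intro x hx
          have := (hA0a x (le_trans hu hx.1)).2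
          linarith
      _ = (a - 1) * (t - u) := by rw [intervalIntegral.integral_const]; ring_nf
  have hlb : ∀ u t : ℝ, 0 ≤ u → u ≤ t → -(1 * (t - u)) ≤ (∫ v in u..t, (A v - 1)) := by
    intro u t hu hut
    have ht : (0:ℝ) ≤ t := le_trans hu hut
    calc -(1 * (t-u)) = ∫ v in u..t, (-1 : ℝ) := by rw [intervalIntegral.integral_const]; rw [smul_eq_mul]; ring
      _ ≤ ∫ v in u..t, (A v - 1) := by
          apply intervalIntegral.integral_mono_on hut intervalIntegrable_const (hAint1 u t hu ht)
          intro x hx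
          have := (hA0a x (le_trans hu hx.1)).1
          linarith
  have hbdd : ∀ t : ℝ, 0 ≤ t →
      BddAbove (Set.range fun u : Set.Icc (0:ℝ) t => ∫ v in (u:ℝ)..t, (A v - 1)) := by
    intro t ht
    refine ⟨(a - 1) * t, ?_⟩
    rintro x ⟨u, rfl⟩
    calc (∫ v in (u:ℝ)..t, (A v - 1)) ≤ (a - 1) * (t - (u:ℝ)) := hub u t u.2.1 u.2.2
      _ ≤ (a - 1) * t := by nlinarith [u.2.1, ha]
  have hQnn : ∀ t : ℝ, 0 ≤ t → 0 ≤ Q t := by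
    intro t ht
    rw [hQ]
    have := le_ciSup (hbdd t ht) (⟨t, ht, le_refl t⟩ : Set.Icc (0:ℝ) t)
    simpa using this
  -- difference formula
  have hWsub : ∀ u t : ℝ, 0 ≤ u → 0 ≤ t → (∫ v in u..t, (A v - 1)) =
      (∫ v in (0:ℝ)..t, (A v - 1)) - (∫ v in (0:ℝ)..u, (A v - 1)) := by
    intro u t hu ht
    exact (intervalIntegral.integral_interval_sub_left (hAint1 0 t le_rfl ht)
      (hAint1 0 u le_rfl hu)).symm
  -- Lipschitz estimates for Q
  have hkey : ∀ s t : ℝ, 0 ≤ s → s ≤ t →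
      Q t ≤ Q s + a * (t - s) ∧ Q s ≤ Q t + a * (t - s) := by
    intro s t hs hst
    have ht : (0:ℝ) ≤ t := le_trans hs hst
    haveI : Nonempty (Set.Icc (0:ℝ) t) := Set.Nonempty.coe_sort (Set.nonempty_Icc.2 ht)
    haveI : Nonempty (Set.Icc (0:ℝ) s) := Set.Nonempty.coe_sort (Set.nonempty_Icc.2 hs)
    have hst' : (∫ v in s..t, (A v - 1)) ≤ (a-1)*(t-s) := hub s t hs hst
    have hst'' : -(1*(t-s)) ≤ ∫ v in s..t, (A v - 1) := hlb s t hs hst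
    constructor
    · rw [hQ t]
      apply ciSup_le
      rintro ⟨u, hu0, hut⟩
      show (∫ v in u..t, (A v - 1)) ≤ _
      by_cases hus : u ≤ s
      · have hsplit : (∫ v in u..t, (A v - 1)) =
            (∫ v in u..s, (A v - 1)) + (∫ v in s..t, (A v - 1)) :=
          (intervalIntegral.integral_add_adjacent_intervals (hAint1 u s hu0 hs)
            (hAint1 s t hs ht)).symm
        have h1 : (∫ v in u..s, (A v - 1)) ≤ Q s := by
          rw [hQ s]
          exact le_ciSup (hbdd s hs) (⟨u, hu0, hus⟩ : Set.Icc (0:ℝ) s)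
        have h4 : (∫ v in s..t, (A v - 1)) ≤ a * (t - s) := by nlinarith
        rw [hsplit]; linarith
      · push_neg at hus
        have h2 : (∫ v in u..t, (A v - 1)) ≤ (a-1)*(t-u) := hub u t hu0 hut
        have h3 : 0 ≤ Q s := hQnn s hs
        nlinarith
    · rw [hQ s]
      apply ciSup_le
      rintro ⟨u, hu0, hus⟩
      show (∫ v in u..s, (A v - 1)) ≤ _
      have hut : u ≤ t := le_trans hus hst
      have hsplit : (∫ v in u..s, (A v - 1)) + (∫ v in s..t, (A v - 1)) =
          (∫ v in u..t, (A v - 1)) :=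
        intervalIntegral.integral_add_adjacent_intervals (hAint1 u s hu0 hs) (hAint1 s t hs ht)
      have h1 : (∫ v in u..t, (A v - 1)) ≤ Q t := by
        rw [hQ t]; exact le_ciSup (hbdd t ht) (⟨u, hu0, hut⟩ : Set.Icc (0:ℝ) t)
      nlinarith
  have hQlip : LipschitzOnWith (Real.toNNReal a) Q (Set.Ici (0:ℝ)) := by
    rw [lipschitzOnWith_iff_dist_le_mul]
    have hcase : ∀ x y : ℝ, 0 ≤ x → x ≤ y → |Q x - Q y| ≤ a * |x - y| := by
      intro x y hx hxy
      obtain ⟨h1, h2⟩ := hkey x y hx hxy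
      have habs : |x - y| = y - x := by rw [abs_of_nonpos (by linarith)]; ring
      rw [habs, abs_le]
      constructor <;> linarith
    intro x hx y hy
    rw [Real.dist_eq, Real.dist_eq, Real.coe_toNNReal a (le_of_lt ha0)]
    rcases le_total x y with h | h
    · exact hcase x y hx h
    · rw [abs_sub_comm, abs_sub_comm x y]; exact hcase y x hy h
  have hQint : ∀ u w : ℝ, 0 ≤ u → 0 ≤ w → IntervalIntegrable Q volume u w := by
    intro u w hu hw
    apply ContinuousOn.intervalIntegrable
    refine (hQlip.continuousOn).mono fun x hx => ?_
    have := hx.1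
    simp only [Set.mem_Ici]
    calc (0:ℝ) ≤ min u w := le_min hu hw
      _ ≤ x := hx.1
  -- exact integral on the on-period
  have honint : ∀ i t, T i ≤ t → t ≤ T i + X i →
      (∫ v in (T i)..t, (A v - 1)) = (a - 1) * (t - T i) := by
    intro i t h1 h2
    have heq : (∫ v in (T i)..t, (A v - 1)) = ∫ v in (T i)..t, (a - 1 : ℝ) := by
      apply intervalIntegral.integral_congr_ae
      have hne : ∀ᵐ v : ℝ, v ≠ T i + X i := by
        rw [ae_iff]
        have : {v : ℝ | ¬ v ≠ T i + X i} = {T i + X i} := by ext v; simp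
        rw [this]
        exact measure_singleton _
      filter_upwards [hne] with v hv hmem
      rw [Set.uIoc_of_le h1] at hmem
      rw [hAon i v hmem.1.le (lt_of_le_of_ne (le_trans hmem.2 h2) hv)]
    rw [heq, intervalIntegral.integral_const, smul_eq_mul]; ring
  have hQlow : ∀ i t, T i ≤ t → t ≤ T i + X i → (a - 1) * (t - T i) ≤ Q t := by
    intro i t h1 h2
    have ht : (0:ℝ) ≤ t := le_trans (hTnn i) h1
    rw [hQ t, ← honint i t h1 h2]
    exact le_ciSup (hbdd t ht) (⟨T i, hTnn i, h1⟩ : Set.Icc (0:ℝ) t)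
  -- per-cycle lower bound
  have hcyc : ∀ i, (a - 1) / 2 * (X i)^2 ≤ ∫ t in (T i)..(T (i + 1)), Q t := by
    intro i
    have h1 : T i ≤ T i + X i := by linarith [hpos i]
    have h2 : T i + X i ≤ T (i+1) := (hTX i).le
    have hXnn : (0:ℝ) ≤ T i + X i := by linarith [hTnn i, hpos i]
    have hsplit : (∫ t in (T i)..(T (i+1)), Q t) =
        (∫ t in (T i)..(T i + X i), Q t) + ∫ t in (T i + X i)..(T (i+1)), Q t :=
      (intervalIntegral.integral_add_adjacent_intervals (hQint _ _ (hTnn i) hXnn)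
        (hQint _ _ hXnn (hTnn (i+1)))).symm
    have hrest : 0 ≤ ∫ t in (T i + X i)..(T (i+1)), Q t :=
      intervalIntegral.integral_nonneg h2 (fun u hu => hQnn u (le_trans hXnn hu.1))
    have heq : (∫ t in (T i)..(T i + X i), (a - 1) * (t - T i)) = (a - 1) / 2 * (X i)^2 := by
      rw [intervalIntegral.integral_const_mul]
      rw [show (∫ t in (T i)..(T i + X i), (t - T i)) =
          ∫ x in (T i - T i)..(T i + X i - T i), x from
        intervalIntegral.integral_comp_sub_right (fun x : ℝ => x) (T i)]
      rw [integral_id]; ring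
    have hmain : (a - 1) / 2 * (X i)^2 ≤ ∫ t in (T i)..(T i + X i), Q t := by
      rw [← heq]
      apply intervalIntegral.integral_mono_on h1 ?_ (hQint _ _ (hTnn i) hXnn)
      · intro x hx; exact hQlow i x hx.1 hx.2
      · exact ((continuous_const.mul (continuous_id.sub continuous_const)).intervalIntegrable _ _)
    linarith
  -- summed lower bound
  have hsum : ∀ N : ℕ, (a - 1) / 2 * (∑ i ∈ Finset.range N, (X i)^2) ≤
      ∫ t in (0:ℝ)..(T N), Q t := by
    intro N
    rw [show (0:ℝ) = T 0 from hT0.symm,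
      ← intervalIntegral.sum_integral_adjacent_intervals
        (fun k _ => hQint _ _ (hTnn k) (hTnn (k+1))), Finset.mul_sum]
    exact Finset.sum_le_sum fun i _ => hcyc i
  -- the ratio sequence tends to infinity
  set S : ℕ → ℝ := fun N => ∑ i ∈ Finset.range N, X i with hSdef
  set V : ℕ → ℝ := fun N => ∑ i ∈ Finset.range N, (X i)^2 with hVdef
  have hSpos : ∀ N : ℕ, 0 < S (N+1) :=
    fun N => Finset.sum_pos (fun i _ => hpos i) (by simp)
  have hrat : Tendsto (fun N : ℕ => ((N:ℝ)+1)/(N:ℝ)) atTop (𝓝 1) := by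
    have h0 : Tendsto (fun N : ℕ => 1 + 1/(N:ℝ)) atTop (𝓝 (1+0)) :=
      tendsto_const_nhds.add tendsto_one_div_atTop_nhds_zero_nat
    rw [add_zero] at h0
    refine h0.congr' ?_
    filter_upwards [eventually_ge_atTop 1] with N hN
    have : (N:ℝ) ≠ 0 := by positivity
    field_simp
  have l1 : Tendsto (fun N : ℕ => ((N:ℝ)+1)⁻¹ * S (N+1)) atTop (𝓝 μ) := by
    have := hS.comp (tendsto_add_atTop_nat 1)
    refine this.congr fun N => ?_
    simp only [Function.comp]
    push_cast
    ring_nf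
    rfl
  have l2 : Tendsto (fun N : ℕ => S (N+1) / (N:ℝ)) atTop (𝓝 μ) := by
    have h0 : Tendsto (fun N : ℕ => (((N:ℝ)+1)⁻¹ * S (N+1)) * (((N:ℝ)+1)/(N:ℝ)))
        atTop (𝓝 (μ * 1)) := l1.mul hrat
    rw [mul_one] at h0
    refine h0.congr' ?_
    filter_upwards [eventually_ge_atTop 1] with N hN
    have h1 : (N:ℝ) ≠ 0 := by positivity
    have h2 : (N:ℝ) + 1 ≠ 0 := by positivity
    field_simp
  have L : Tendsto (fun N : ℕ => (N:ℝ) / S (N+1)) atTop (𝓝 μ⁻¹) := by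
    have := l2.inv₀ (ne_of_gt hμ)
    refine this.congr fun N => ?_
    rw [inv_div]
  have hC : 0 < (a-1)/(2*r) * μ⁻¹ := by
    exact mul_pos (div_pos (by linarith) (by linarith)) (inv_pos.2 hμ)
  have hF : Tendsto (fun N : ℕ => (a-1)/2 * V N / T (N+1)) atTop atTop := by
    have h0 : Tendsto (fun N : ℕ =>
        (((N:ℝ))⁻¹ * V N) * ((a-1)/(2*r) * ((N:ℝ) / S (N+1)))) atTop atTop :=
      hV.atTop_mul_pos hC (L.const_mul _)
    refine h0.congr' ?_
    filter_upwards [eventually_ge_atTop 1] with N hN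
    have h1 : (N:ℝ) ≠ 0 := by positivity
    have h2 : S (N+1) ≠ 0 := ne_of_gt (hSpos N)
    have h3 : T (N+1) = r * S (N+1) := hT (N+1)
    rw [h3]
    have hr0' : r ≠ 0 := ne_of_gt hr0
    field_simp
  -- conclude
  rw [tendsto_atTop]
  intro M
  obtain ⟨N₀, hN₀⟩ := (tendsto_atTop.1 hF M).exists_forall_of_atTop
  filter_upwards [eventually_ge_atTop (max 1 (T N₀))] with R hR
  have hR1 : (1:ℝ) ≤ R := le_trans (le_max_left _ _) hR
  have hR0 : (0:ℝ) < R := lt_of_lt_of_le one_pos hR1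
  have hTN0R : T N₀ ≤ R := le_trans (le_max_right _ _) hR
  -- find the cycle containing R
  have hex : ∃ k, R < T k := (hTtop.eventually_gt_atTop R).exists
  classical
  set k := Nat.find hex with hk
  have hk1 : R < T k := Nat.find_spec hex
  have hkne : k ≠ 0 := by
    intro h0
    rw [h0, hT0] at hk1; linarith
  obtain ⟨i, hik⟩ := Nat.exists_eq_succ_of_ne_zero hkne
  have hiR : T i ≤ R := by
    by_contra h
    exact (Nat.find_min hex (show i < k by omega)) (lt_of_not_ge h)
  have hRi1 : R < T (i+1) := by rw [← Nat.succ_eq_add_one, ← hik]; exact hk1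
  have hiN0 : N₀ ≤ i := by
    by_contra h
    push_neg at h
    have : T (i+1) ≤ T N₀ := hTmono.monotone (by omega)
    linarith
  -- chain of inequalities
  have h1 : (∫ t in (0:ℝ)..(T i), Q t) ≤ ∫ t in (0:ℝ)..R, Q t := by
    have hadd := intervalIntegral.integral_add_adjacent_intervals
      (hQint 0 (T i) le_rfl (hTnn i)) (hQint (T i) R (hTnn i) hR0.le)
    have hrest : 0 ≤ ∫ t in (T i)..R, Q t :=
      intervalIntegral.integral_nonneg hiR (fun u hu => hQnn u (le_trans (hTnn i) hu.1))
    linarith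
  have h2 : (a-1)/2 * V i ≤ ∫ t in (0:ℝ)..(T i), Q t := hsum i
  have hVnn : 0 ≤ (a-1)/2 * V i := by
    apply mul_nonneg (by linarith)
    exact Finset.sum_nonneg fun j _ => sq_nonneg _
  have hTi1pos : 0 < T (i+1) := lt_trans hR0 hRi1
  calc M ≤ (a-1)/2 * V i / T (i+1) := hN₀ i hiN0
    _ ≤ (a-1)/2 * V i / R := by
        apply div_le_div_of_nonneg_left hVnn hR0 hRi1.le
    _ = (1/R) * ((a-1)/2 * V i) := by ring
    _ ≤ (1/R) * ∫ t in (0:ℝ)..R, Q t := by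
        apply mul_le_mul_of_nonneg_left (le_trans h2 h1) (by positivity)


/-- Theorem 1, pathwise form: for `a > 1`, `λ ∈ (0,1)` and an
i.i.d. sequence `(Xᵢ)` of positive random variables with finite positive mean and
infinite second moment, the reordered on/off process `A'` (cycle endpoints
`T N ω = (a/λ) Σ_{i<N} Xᵢ ω`, rate `a` on `[T i, T i + Xᵢ)`, `0` on
`[T i + Xᵢ, T (i+1))`) with queue `Q ω t = sup_{0 ≤ s ≤ t} ∫_s^t (A' ω u - 1) du`
satisfies, almost surely, `(1/T) ∫_0^T Q ω t dt → ∞` as `T → ∞`. -/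
theorem stmt_5 {Ω : Type*} [MeasureSpace Ω] [IsProbabilityMeasure (ℙ : Measure Ω)]
    (a lam : ℝ) (ha : 1 < a) (hlam : lam ∈ Set.Ioo (0:ℝ) 1)
    (X : ℕ → Ω → ℝ) (hmeas : ∀ i, Measurable (X i))
    (hpos : ∀ i ω, 0 < X i ω)
    (hindep : iIndepFun X ℙ)
    (hident : ∀ i, IdentDistrib (X i) (X 0) ℙ ℙ)
    (hint : Integrable (X 0) ℙ)
    (hmean : 0 < ∫ ω, X 0 ω)
    (hsq : ∫⁻ ω, ENNReal.ofReal ((X 0 ω) ^ 2) = ⊤)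
    (T : Ω → ℕ → ℝ)
    (hT : ∀ ω N, T ω N = (a / lam) * ∑ i ∈ Finset.range N, X i ω)
    (A : Ω → ℝ → ℝ)
    (hAon : ∀ ω i, ∀ t, T ω i ≤ t → t < T ω i + X i ω → A ω t = a)
    (hAoff : ∀ ω i, ∀ t, T ω i + X i ω ≤ t → t < T ω (i + 1) → A ω t = 0)
    (Q : Ω → ℝ → ℝ)
    (hQ : ∀ ω t, Q ω t = ⨆ u : Set.Icc (0:ℝ) t, ∫ v in (u : ℝ)..t, (A ω v - 1)) :
    ∀ᵐ ω ∂ℙ, Tendsto (fun R : ℝ => (1 / R) * ∫ t in (0:ℝ)..R, Q ω t) atTop atTop := by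
  classical
  have hSLLN := ProbabilityTheory.strong_law_ae X hint
    (fun i j hij => hindep.indepFun hij) hident
  set φ : ℕ → ℝ → ℝ := fun M x => min (x^2) M with hφ
  have hφm : ∀ M : ℕ, Measurable (φ M) :=
    fun M => (measurable_id.pow_const 2).min measurable_const
  have hφnn : ∀ (M : ℕ) (x : ℝ), 0 ≤ φ M x :=
    fun M x => le_min (sq_nonneg _) (Nat.cast_nonneg M)
  have hint' : ∀ M : ℕ, Integrable (fun ω => φ M (X 0 ω)) ℙ := by
    intro M
    apply Integrable.mono' (integrable_const (M:ℝ))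
      ((hφm M).comp (hmeas 0)).aestronglyMeasurable
    apply ae_of_all
    intro ω
    show ‖φ M (X 0 ω)‖ ≤ (M:ℝ)
    rw [Real.norm_eq_abs, abs_of_nonneg (hφnn M _)]
    exact min_le_right _ _
  have hY : ∀ M : ℕ, ∀ᵐ ω ∂ℙ, Tendsto
      (fun n : ℕ => ((n:ℝ))⁻¹ • ∑ i ∈ Finset.range n, φ M (X i ω)) atTop
      (𝓝 (∫ ω, φ M (X 0 ω))) := by
    intro M
    exact ProbabilityTheory.strong_law_ae (fun i ω => φ M (X i ω)) (hint' M)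
      (fun i j hij => (hindep.indepFun hij).comp (hφm M) (hφm M))
      (fun i => (hident i).comp (hφm M))
  have hmM : ∀ C : ℝ, ∃ M : ℕ, C ≤ ∫ ω, φ M (X 0 ω) := by
    intro C
    by_contra hcon
    push_neg at hcon
    have hfmeas : ∀ M : ℕ, Measurable fun ω => ENNReal.ofReal (φ M (X 0 ω)) :=
      fun M => ENNReal.measurable_ofReal.comp ((hφm M).comp (hmeas 0))
    have hmono : Monotone fun (M:ℕ) (ω : Ω) => ENNReal.ofReal (φ M (X 0 ω)) := by
      intro M M' hMM ω
      exact ENNReal.ofReal_le_ofReal (min_le_min le_rfl (Nat.cast_le.2 hMM))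
    have hsup : ∀ ω, (⨆ M : ℕ, ENNReal.ofReal (φ M (X 0 ω))) =
        ENNReal.ofReal ((X 0 ω)^2) := by
      intro ω
      apply le_antisymm
      · exact iSup_le fun M => ENNReal.ofReal_le_ofReal (min_le_left _ _)
      · calc ENNReal.ofReal ((X 0 ω)^2)
            = ENNReal.ofReal (φ (⌈(X 0 ω)^2⌉₊) (X 0 ω)) := by
              simp only [hφ]
              rw [min_eq_left (Nat.le_ceil _)]
          _ ≤ ⨆ M : ℕ, ENNReal.ofReal (φ M (X 0 ω)) := le_iSup (fun M : ℕ => ENNReal.ofReal (φ M (X 0 ω))) _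
    have h1 : (⊤ : ENNReal) = ⨆ M : ℕ, ∫⁻ ω, ENNReal.ofReal (φ M (X 0 ω)) := by
      rw [← hsq, ← lintegral_iSup hfmeas hmono]
      exact lintegral_congr fun ω => (hsup ω).symm
    have h2 : ∀ M : ℕ, (∫⁻ ω, ENNReal.ofReal (φ M (X 0 ω))) ≤ ENNReal.ofReal C := by
      intro M
      rw [← MeasureTheory.ofReal_integral_eq_lintegral_ofReal (hint' M)
        (ae_of_all _ fun ω => hφnn M _)]
      exact ENNReal.ofReal_le_ofReal (hcon M).le
    have h3 : (⊤ : ENNReal) ≤ ENNReal.ofReal C := h1.le.trans (iSup_le h2)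
    exact (lt_irrefl _ (lt_of_le_of_lt h3 ENNReal.ofReal_lt_top))
  have hae2 : ∀ᵐ ω ∂ℙ, Tendsto
      (fun n : ℕ => ((n:ℝ))⁻¹ * ∑ i ∈ Finset.range n, (X i ω)^2) atTop atTop := by
    filter_upwards [(ae_all_iff).2 hY] with ω hω
    rw [tendsto_atTop]
    intro C
    obtain ⟨M, hM⟩ := hmM (C+1)
    have hev : ∀ᶠ n : ℕ in atTop,
        C ≤ ((n:ℝ))⁻¹ • ∑ i ∈ Finset.range n, φ M (X i ω) :=
      (hω M).eventually (eventually_ge_nhds (by linarith))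
    filter_upwards [hev] with n hn
    calc C ≤ ((n:ℝ))⁻¹ • ∑ i ∈ Finset.range n, φ M (X i ω) := hn
      _ ≤ ((n:ℝ))⁻¹ * ∑ i ∈ Finset.range n, (X i ω)^2 := by
          rw [smul_eq_mul]
          apply mul_le_mul_of_nonneg_left
            (Finset.sum_le_sum fun i _ => min_le_left _ _) (by positivity)
  filter_upwards [hSLLN, hae2] with ω h1 h2
  exact det_main a lam ha hlam.1 hlam.2 (fun i => X i ω) (fun i => hpos i ω)
    (T ω) (hT ω) (A ω) (fun i t => hAon ω i t) (fun i t => hAoff ω i t)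
    (Q ω) (hQ ω) (∫ ω, X 0 ω) hmean
    (by simpa [smul_eq_mul] using h1) h2
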